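/- arXiv:cs/0601091 — 3 statements merged into one kernel-verified Lean document; each statement's English description precedes it below -/
import Mathlib

section
/- Let b_1, ..., b_M be a basis of a lattice, and write b_i = b_i' + Σ_{j≠i} c_{ij} b_j where b_i' is orthogonal to all b_j, j ≠ i. Then for the orthogonality defect δ of the basis, ‖b_i‖ ≤ √δ · ‖b_i'‖. -/
open Finset

/-- Orthogonality defect of a family of vectors in ℂ^N (via the Gram determinant). -/
noncomputable def orthDefect {N M : ℕ} (b : Fin M → EuclideanSpace ℂ (Fin N)) : ℝ :=
  (∏ i, ‖b i‖ ^ 2) / (Matrix.det (Matrix.of fun i j => (inner ℂ (b i) (b j) : ℂ))).re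

namespace OrthAux

open Matrix

noncomputable def gram {N n : ℕ} (v : Fin n → EuclideanSpace ℂ (Fin N)) :
    Matrix (Fin n) (Fin n) ℂ :=
  Matrix.of fun i j => (inner ℂ (v i) (v j) : ℂ)

lemma gram_apply {N n : ℕ} (v : Fin n → EuclideanSpace ℂ (Fin N)) (j k : Fin n) :
    gram v j k = (inner ℂ (v j) (v k) : ℂ) := rfl

lemma gram_det_update {N n : ℕ} (v : Fin n → EuclideanSpace ℂ (Fin N)) (i : Fin n)
    (v' : EuclideanSpace ℂ (Fin N)) (c : Fin n → ℂ) (hci : c i = 0)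
    (h : v i = v' + ∑ j, c j • v j) :
    (gram (Function.update v i v')).det = (gram v).det := by
  classical
  set d : Fin n → ℂ := fun j => if j = i then 1 else -(c j) with hd
  have hvsub : v' = v i - ∑ j, c j • v j := by
    rw [h]; abel
  have hv' : v' = ∑ j, d j • v j := by
    have h1 : ∀ j : Fin n, d j • v j = (if j = i then v j else 0) - c j • v j := by
      intro j
      by_cases hj : j = i
      · subst hj; simp [hd, hci]
      · simp [hd, hj, neg_smul]
    rw [hvsub]
    rw [Finset.sum_congr rfl fun j _ => h1 j, Finset.sum_sub_distrib]
    congr 1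
    simp
  set G := gram v with hG
  have hcol : (fun k => (inner ℂ (v k) v' : ℂ)) = fun k => ∑ j, d j • G k j := by
    funext k
    rw [hv', inner_sum]
    refine Finset.sum_congr rfl fun j _ => ?_
    rw [inner_smul_right]
    rfl
  set G1 := G.updateCol i (fun k => (inner ℂ (v k) v' : ℂ)) with hG1
  have h1 : G1.det = G.det := by
    rw [hG1, hcol, Matrix.det_updateCol_sum G i d]
    simp [hd]
  set e : Fin n → ℂ := fun j => starRingEnd ℂ (d j) with he
  have hG1app : ∀ j k, G1 j k = (inner ℂ (v j) (Function.update v i v' k) : ℂ) := by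
    intro j k
    rw [hG1, Matrix.updateCol_apply, Function.update_apply]
    by_cases hk : k = i
    · simp [hk]
    · simp [hk, hG, gram_apply]
  have hip : ∀ u : EuclideanSpace ℂ (Fin N), (inner ℂ v' u : ℂ)
      = ∑ j, (starRingEnd ℂ (d j)) * (inner ℂ (v j) u : ℂ) := by
    intro u
    rw [hv', sum_inner]
    exact Finset.sum_congr rfl fun j _ => by rw [inner_smul_left]
  have hrow : (fun k => (inner ℂ v' (Function.update v i v' k) : ℂ)) = ∑ j, e j • G1 j := by
    funext k
    rw [Finset.sum_apply]
    rw [hip]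
    refine Finset.sum_congr rfl fun j _ => ?_
    rw [Pi.smul_apply, smul_eq_mul, hG1app, he]
  set G2 := G1.updateRow i (fun k => (inner ℂ v' (Function.update v i v' k) : ℂ)) with hG2
  have h2 : G2.det = G1.det := by
    rw [hG2, hrow, Matrix.det_updateRow_sum G1 i e]
    simp [he, hd]
  have h3 : gram (Function.update v i v') = G2 := by
    ext j k
    rw [hG2, Matrix.updateRow_apply]
    by_cases hj : j = i
    · subst hj
      rw [if_pos rfl, gram_apply, Function.update_self]
    · rw [if_neg hj, hG1app, gram_apply, Function.update_of_ne hj]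
  rw [h3, h2, h1]

lemma gram_hadamard {N : ℕ} : ∀ (n : ℕ) (v : Fin n → EuclideanSpace ℂ (Fin N)),
    ∃ r : ℝ, 0 ≤ r ∧ r ≤ ∏ i, ‖v i‖ ^ 2 ∧ (gram v).det = (r : ℂ) := by
  intro n
  induction n with
  | zero =>
    intro v
    exact ⟨1, zero_le_one, by simp, by simp [Matrix.det_fin_zero]⟩
  | succ n ih =>
    intro v
    classical
    set K := Submodule.span ℂ (Set.range (v ∘ Fin.castSucc)) with hK
    haveI : FiniteDimensional ℂ K := FiniteDimensional.span_of_finite ℂ (Set.finite_range _)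
    set w : EuclideanSpace ℂ (Fin N) := ((K.orthogonalProjectionOnto (v (Fin.last n)) : K) : EuclideanSpace ℂ (Fin N)) with hw
    set v' := v (Fin.last n) - w with hv'
    have horthK : ∀ u ∈ K, (inner ℂ v' u : ℂ) = 0 := fun u hu =>
      K.starProjection_inner_eq_zero (v (Fin.last n)) u hu
    have hwK : w ∈ K := (K.orthogonalProjectionOnto (v (Fin.last n))).2
    obtain ⟨c, hc⟩ := (Submodule.mem_span_range_iff_exists_fun ℂ).1 hwK
    set c' : Fin (n + 1) → ℂ := Fin.snoc c 0 with hc'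
    have hdecomp : v (Fin.last n) = v' + ∑ j, c' j • v j := by
      have hs : ∑ j, c' j • v j = w := by
        rw [Fin.sum_univ_castSucc]
        simp only [hc', Fin.snoc_castSucc, Fin.snoc_last, zero_smul, add_zero]
        exact hc
      rw [hs, hv']; abel
    have hred := gram_det_update v (Fin.last n) v' c' (by simp [hc']) hdecomp
    set vt := Function.update v (Fin.last n) v' with hvt
    have hlastrow : ∀ j : Fin (n + 1), j ≠ Fin.last n → gram vt (Fin.last n) j = 0 := by
      intro j hj
      rw [gram_apply, hvt, Function.update_self, Function.update_of_ne hj]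
      obtain ⟨k, rfl⟩ := Fin.exists_castSucc_eq.2 hj
      exact horthK _ (Submodule.subset_span ⟨k, rfl⟩)
    have hlastlast : gram vt (Fin.last n) (Fin.last n) = ((‖v'‖ ^ 2 : ℝ) : ℂ) := by
      rw [gram_apply, hvt, Function.update_self]
      rw [inner_self_eq_norm_sq_to_K]
      norm_cast
    obtain ⟨r, hr0, hrle, hrdet⟩ := ih (v ∘ Fin.castSucc)
    have hminor : (gram vt).submatrix (Fin.last n).succAbove (Fin.last n).succAbove
        = gram (v ∘ Fin.castSucc) := by
      ext j k
      rw [Fin.succAbove_last]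
      rw [Matrix.submatrix_apply, gram_apply, gram_apply, hvt,
        Function.update_of_ne (Fin.castSucc_lt_last j).ne,
        Function.update_of_ne (Fin.castSucc_lt_last k).ne]
      rfl
    have hdet : (gram vt).det = ((‖v'‖ ^ 2 : ℝ) : ℂ) * (r : ℂ) := by
      rw [Matrix.det_succ_row _ (Fin.last n)]
      rw [Finset.sum_eq_single (Fin.last n)]
      · rw [hlastlast, hminor, hrdet]
        have : (-1 : ℂ) ^ ((Fin.last n : ℕ) + (Fin.last n : ℕ)) = 1 :=
          Even.neg_one_pow ⟨(Fin.last n : ℕ), rfl⟩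
        rw [this, one_mul]
      · intro j _ hj
        rw [hlastrow j hj]
        ring
      · intro hmem
        exact absurd (Finset.mem_univ _) hmem
    have hnorm : ‖v'‖ ≤ ‖v (Fin.last n)‖ := by
      have hinner : (inner ℂ w v' : ℂ) = 0 := by
        rw [← inner_conj_symm, horthK w hwK, map_zero]
      have hsum : w + v' = v (Fin.last n) := by rw [hv']; abel
      have := norm_add_sq_eq_norm_sq_add_norm_sq_of_inner_eq_zero w v' hinner
      rw [hsum] at this
      nlinarith [norm_nonneg w, norm_nonneg v', norm_nonneg (v (Fin.last n))]
    refine ⟨‖v'‖ ^ 2 * r, mul_nonneg (sq_nonneg _) hr0, ?_, by rw [← hred, hdet]; push_cast; ring⟩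
    rw [Fin.prod_univ_castSucc]
    calc ‖v'‖ ^ 2 * r ≤ ‖v (Fin.last n)‖ ^ 2 * ∏ i : Fin n, ‖(v ∘ Fin.castSucc) i‖ ^ 2 := by
          apply mul_le_mul _ hrle hr0 (sq_nonneg _)
          exact pow_le_pow_left₀ (norm_nonneg _) hnorm 2
      _ = (∏ i : Fin n, ‖v (Fin.castSucc i)‖ ^ 2) * ‖v (Fin.last n)‖ ^ 2 := by
          rw [mul_comm]; rfl

open scoped ComplexOrder in
lemma gram_posDef {N n : ℕ} {v : Fin n → EuclideanSpace ℂ (Fin N)}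
    (hli : LinearIndependent ℂ v) : (gram v).PosDef := by
  classical
  rw [Matrix.posDef_iff_dotProduct_mulVec]
  constructor
  · ext j k
    rw [Matrix.conjTranspose_apply, gram_apply, gram_apply, RCLike.star_def]
    exact inner_conj_symm _ _
  · intro x hx
    have hu : (∑ j, x j • v j) ≠ 0 := by
      intro h0
      apply hx
      funext j
      exact Fintype.linearIndependent_iff.1 hli x h0 j
    have hvec : ∀ j, (gram v *ᵥ x) j = (inner ℂ (v j) (∑ k, x k • v k) : ℂ) := by
      intro j
      rw [inner_sum]
      simp only [inner_smul_right]
      simp [Matrix.mulVec, dotProduct, gram_apply, mul_comm]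
    have hdp : dotProduct (star x) (gram v *ᵥ x)
        = ((‖∑ j, x j • v j‖ ^ 2 : ℝ) : ℂ) := by
      rw [dotProduct]
      have : ∀ j, (star x) j * (gram v *ᵥ x) j
          = (inner ℂ (x j • v j) (∑ k, x k • v k) : ℂ) := by
        intro j
        rw [hvec, inner_smul_left]
        rfl
      rw [Finset.sum_congr rfl fun j _ => this j, ← sum_inner, inner_self_eq_norm_sq_to_K]
      norm_cast
    rw [hdp]
    have : (0 : ℝ) < ‖∑ j, x j • v j‖ ^ 2 := pow_pos (norm_pos_iff.2 hu) 2
    exact_mod_cast this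

open scoped ComplexOrder in
lemma gram_det_re_pos {N n : ℕ} {v : Fin n → EuclideanSpace ℂ (Fin N)}
    (hli : LinearIndependent ℂ v) : 0 < ((gram v).det).re := by
  have h := (gram_posDef hli).det_pos
  rw [Complex.lt_def] at h
  simpa using h.1

end OrthAux

set_option maxHeartbeats 1000000 in
open OrthAux in
theorem stmt2 {N M : ℕ} (b : Fin M → EuclideanSpace ℂ (Fin N))
    (hli : LinearIndependent ℂ b) (i : Fin M)
    (b' : EuclideanSpace ℂ (Fin N)) (c : Fin M → ℂ)
    -- decomposition b i = b' + ∑_{j ≠ i} c j • b j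
    (hdec : b i = b' + ∑ j ∈ Finset.univ.erase i, c j • b j)
    -- b' is orthogonal to every b j, j ≠ i
    (horth : ∀ j, j ≠ i → (inner ℂ (b j) b' : ℂ) = 0) :
    ‖b i‖ ≤ Real.sqrt (orthDefect b) * ‖b'‖ := by
  classical
  have hdetpos : 0 < ((gram b).det).re := gram_det_re_pos hli
  set c' := Function.update c i 0 with hc'
  have hdec' : b i = b' + ∑ j, c' j • b j := by
    rw [hdec]
    congr 1
    rw [← Finset.add_sum_erase _ _ (Finset.mem_univ i)]
    have h0 : c' i • b i = 0 := by simp [hc']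
    rw [h0, zero_add]
    exact (Finset.sum_congr rfl fun j hj => by
      rw [hc', Function.update_of_ne (Finset.ne_of_mem_erase hj)]).symm
  have hred := gram_det_update b i b' c' (by simp [hc']) hdec'
  obtain ⟨r, hr0, hrle, hrdet⟩ := gram_hadamard M (Function.update b i b')
  have hdet : ((gram b).det).re = r := by
    rw [← hred, hrdet, Complex.ofReal_re]
  have hrpos : 0 < r := by rwa [hdet] at hdetpos
  set P := ∏ j ∈ Finset.univ.erase i, ‖b j‖ ^ 2 with hP
  have hPpos : 0 < P := by
    apply Finset.prod_pos
    intro j _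
    exact pow_pos (norm_pos_iff.2 (hli.ne_zero j)) 2
  have hprod_update : ∏ j, ‖Function.update b i b' j‖ ^ 2 = ‖b'‖ ^ 2 * P := by
    rw [← Finset.mul_prod_erase Finset.univ _ (Finset.mem_univ i), Function.update_self]
    congr 1
    exact Finset.prod_congr rfl fun j hj => by
      rw [Function.update_of_ne (Finset.ne_of_mem_erase hj)]
  have hprod_b : ∏ j, ‖b j‖ ^ 2 = ‖b i‖ ^ 2 * P := by
    rw [← Finset.mul_prod_erase Finset.univ _ (Finset.mem_univ i)]
  have hrle' : r ≤ ‖b'‖ ^ 2 * P := by rw [← hprod_update]; exact hrle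
  have hb'pos : 0 < ‖b'‖ := by
    by_contra h
    push_neg at h
    have : ‖b'‖ = 0 := le_antisymm h (norm_nonneg _)
    rw [this] at hrle'
    nlinarith
  have hOD : orthDefect b = (‖b i‖ ^ 2 * P) / r := by
    have hgram : orthDefect b = (∏ j, ‖b j‖ ^ 2) / ((gram b).det).re := rfl
    rw [hgram, hprod_b, hdet]
  rw [hOD]
  have hkey : ‖b i‖ ^ 2 / ‖b'‖ ^ 2 ≤ (‖b i‖ ^ 2 * P) / r := by
    have h1 : (‖b i‖ ^ 2 * P) / (‖b'‖ ^ 2 * P) ≤ (‖b i‖ ^ 2 * P) / r :=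
      div_le_div_of_nonneg_left (mul_nonneg (sq_nonneg _) hPpos.le) hrpos hrle'
    have h2 : (‖b i‖ ^ 2 * P) / (‖b'‖ ^ 2 * P) = ‖b i‖ ^ 2 / ‖b'‖ ^ 2 := by
      rw [mul_div_mul_right _ _ hPpos.ne']
    rw [← h2]
    exact h1
  have hsq : Real.sqrt (‖b i‖ ^ 2 / ‖b'‖ ^ 2) = ‖b i‖ / ‖b'‖ := by
    rw [← div_pow, Real.sqrt_sq (by positivity)]
  calc ‖b i‖ = (‖b i‖ / ‖b'‖) * ‖b'‖ := by field_simp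
    _ ≤ Real.sqrt ((‖b i‖ ^ 2 * P) / r) * ‖b'‖ := by
        apply mul_le_mul_of_nonneg_right _ (norm_nonneg _)
        rw [← hsq]
        exact Real.sqrt_le_sqrt hkey
end

section
/- Let h ∈ ℂ^{N_t} be a vector with i.i.d. unit-variance complex Gaussian entries and let R ≥ 1 be a fixed rate. Then the outage probability P_out = Pr{log₂(1 + ρ‖h‖²) ≤ R} satisfies P_out ≥ c · 2^{N_t R} / ρ^{N_t} for all ρ > 2^{R-1}, where c = e^{-1}/(2^{N_t} N_t!). Consequently lim_{ρ→∞} (−log P_out)/(log ρ) ≤ N_t. -/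
open MeasureTheory Real Filter

/-- Euclidean norm of a complex vector. -/
noncomputable def cnorm {N : ℕ} (v : Fin N → ℂ) : ℝ :=
  Real.sqrt (∑ i, Complex.normSq (v i))

/-- The law of a `CN(0, I_N)` vector in `ℂ^N`. -/
noncomputable def stdComplexGaussian (N : ℕ) : Measure (Fin N → ℂ) :=
  (volume : Measure (Fin N → ℂ)).withDensity fun h =>
    ENNReal.ofReal (Real.exp (-(cnorm h) ^ 2) / π ^ N)

/-- Outage probability of a fixed-rate `R` MISO link at SNR `ρ`. -/
noncomputable def Pout (Nt : ℕ) (R ρ : ℝ) : ENNReal :=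
  stdComplexGaussian Nt {h | Real.logb 2 (1 + ρ * (cnorm h) ^ 2) ≤ R}

lemma cnorm_sq {N : ℕ} (v : Fin N → ℂ) : (cnorm v) ^ 2 = ∑ i, Complex.normSq (v i) := by
  rw [cnorm, Real.sq_sqrt (Finset.sum_nonneg fun i _ => Complex.normSq_nonneg _)]

lemma cnorm_sq_nonneg {N : ℕ} (v : Fin N → ℂ) : 0 ≤ (cnorm v) ^ 2 := sq_nonneg _

lemma continuous_cnorm_sq {N : ℕ} : Continuous fun h : Fin N → ℂ => (cnorm h) ^ 2 := by
  have : (fun h : Fin N → ℂ => (cnorm h) ^ 2) = fun h => ∑ i, Complex.normSq (h i) :=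
    funext cnorm_sq
  rw [this]
  exact continuous_finset_sum _ fun i _ => Complex.continuous_normSq.comp (continuous_apply i)

lemma vol_lemma (N : ℕ) (hN : 1 ≤ N) {t : ℝ} (ht : 0 ≤ t) :
    volume {h : Fin N → ℂ | (cnorm h) ^ 2 ≤ t} =
      ENNReal.ofReal (t ^ N * (π ^ N / (N.factorial : ℝ))) := by
  have : Nonempty (Fin N) := Fin.pos_iff_nonempty.mp hN
  have key := Complex.volume_sum_rpow_le (ι := Fin N) (p := 2) one_le_two (Real.sqrt t)
  have hset : {h : Fin N → ℂ | (cnorm h) ^ 2 ≤ t}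
      = {x : Fin N → ℂ | (∑ i, ‖x i‖ ^ (2:ℝ)) ^ (1/(2:ℝ)) ≤ Real.sqrt t} := by
    ext x
    simp only [Set.mem_setOf_eq]
    rw [cnorm_sq]
    have h1 : ∀ i, ‖x i‖ ^ (2:ℝ) = Complex.normSq (x i) := by
      intro i
      rw [Real.rpow_two, Complex.sq_norm]
    simp_rw [h1]
    rw [← Real.sqrt_eq_rpow, Real.sqrt_le_sqrt_iff ht]
  rw [hset, key]
  have hcard : Fintype.card (Fin N) = N := Fintype.card_fin N
  rw [hcard]
  have h2 : (2:ℝ) / 2 + 1 = 2 := by norm_num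
  have h3 : (2:ℝ) * (N:ℝ) / 2 + 1 = (N:ℝ) + 1 := by ring
  rw [h2, h3, Real.Gamma_two]
  have h4 : Real.Gamma ((N:ℝ) + 1) = (N.factorial : ℝ) := by
    exact_mod_cast Real.Gamma_nat_eq_factorial N
  rw [h4, mul_one]
  have h5 : ENNReal.ofReal (Real.sqrt t) ^ (2 * N) = ENNReal.ofReal (t ^ N) := by
    rw [← ENNReal.ofReal_pow (Real.sqrt_nonneg t), pow_mul, Real.sq_sqrt ht]
  rw [h5, ← ENNReal.ofReal_mul (by positivity)]

lemma pout_lower (Nt : ℕ) (hNt : 1 ≤ Nt) (R : ℝ) (hR : 1 ≤ R) (ρ : ℝ)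
    (hρ : (2:ℝ) ^ (R - 1) < ρ) :
    ENNReal.ofReal ((Real.exp (-1) / (2 ^ Nt * (Nat.factorial Nt))) *
        (2 : ℝ) ^ ((Nt : ℝ) * R) / ρ ^ Nt) ≤ Pout Nt R ρ := by
  have h2R1 : (1:ℝ) ≤ (2:ℝ) ^ (R - 1) := Real.one_le_rpow one_le_two (by linarith)
  have hρ0 : (0:ℝ) < ρ := lt_of_lt_of_le (by linarith) hρ.le
  set t : ℝ := (2:ℝ) ^ (R - 1) / ρ with ht_def
  have ht0 : 0 ≤ t := by positivity
  have ht1 : t < 1 := (div_lt_one hρ0).mpr hρ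
  set S : Set (Fin Nt → ℂ) := {h | (cnorm h) ^ 2 ≤ t} with hS_def
  have hmeas : MeasurableSet S :=
    measurableSet_le continuous_cnorm_sq.measurable measurable_const
  have hsub : S ⊆ {h | Real.logb 2 (1 + ρ * (cnorm h) ^ 2) ≤ R} := by
    intro h hh
    simp only [Set.mem_setOf_eq] at hh ⊢
    have hx : (0:ℝ) < 1 + ρ * (cnorm h) ^ 2 := by
      have := cnorm_sq_nonneg h; nlinarith
    rw [Real.logb_le_iff_le_rpow one_lt_two hx]
    have hmul : ρ * (cnorm h) ^ 2 ≤ (2:ℝ) ^ (R - 1) := by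
      have := mul_le_mul_of_nonneg_left hh hρ0.le
      rwa [mul_div_cancel₀ _ hρ0.ne'] at this
    have h2R : (2:ℝ) ^ R = 2 * (2:ℝ) ^ (R - 1) := by
      have h := Real.rpow_add two_pos 1 (R - 1)
      rw [Real.rpow_one, show (1:ℝ) + (R - 1) = R by ring] at h
      exact h
    linarith
  have step1 : stdComplexGaussian Nt S ≤ Pout Nt R ρ := measure_mono hsub
  have step2 : ENNReal.ofReal (Real.exp (-1) / π ^ Nt) * volume S ≤ stdComplexGaussian Nt S := by
    rw [stdComplexGaussian, withDensity_apply _ hmeas, ← setLIntegral_const S _]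
    apply setLIntegral_mono
    · exact ((Real.continuous_exp.comp (continuous_cnorm_sq.neg)).div_const _).measurable.ennreal_ofReal
    · intro x hx
      apply ENNReal.ofReal_le_ofReal
      have hle : (cnorm x) ^ 2 ≤ 1 := le_trans hx ht1.le
      exact (div_le_div_iff_of_pos_right (by positivity)).mpr (Real.exp_le_exp.mpr (by linarith))
  rw [vol_lemma Nt hNt ht0, ← ENNReal.ofReal_mul (by positivity)] at step2
  refine le_trans (le_trans (ENNReal.ofReal_le_ofReal (le_of_eq ?_)) step2) step1
  have hkey : ((2:ℝ) ^ (R - 1)) ^ Nt = (2:ℝ) ^ ((Nt:ℝ) * R) / 2 ^ Nt := by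
    rw [← Real.rpow_natCast ((2:ℝ) ^ (R - 1)) Nt, ← Real.rpow_mul (by norm_num : (0:ℝ) ≤ 2),
      ← Real.rpow_natCast (2:ℝ) Nt, ← Real.rpow_sub two_pos]
    congr 1; ring
  rw [ht_def, div_pow, hkey]
  have hπ : (0:ℝ) < π ^ Nt := by positivity
  have hfac : (0:ℝ) < (Nt.factorial : ℝ) := by exact_mod_cast Nt.factorial_pos
  field_simp

lemma pout_upper (Nt : ℕ) (hNt : 1 ≤ Nt) (R : ℝ) (hR : 1 ≤ R) (ρ : ℝ) (hρ0 : 0 < ρ) :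
    Pout Nt R ρ ≤ ENNReal.ofReal ((((2:ℝ) ^ R - 1) / ρ) ^ Nt / (Nat.factorial Nt : ℝ)) := by
  have h2R : (1:ℝ) ≤ (2:ℝ) ^ R := Real.one_le_rpow one_le_two (by linarith)
  set t₀ : ℝ := ((2:ℝ) ^ R - 1) / ρ with ht₀_def
  have ht₀ : 0 ≤ t₀ := by
    apply div_nonneg _ hρ0.le; linarith
  have hmeas : MeasurableSet {h : Fin Nt → ℂ | (cnorm h) ^ 2 ≤ t₀} :=
    measurableSet_le continuous_cnorm_sq.measurable measurable_const
  have hsub : {h : Fin Nt → ℂ | Real.logb 2 (1 + ρ * (cnorm h) ^ 2) ≤ R}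
      ⊆ {h | (cnorm h) ^ 2 ≤ t₀} := by
    intro h hh
    simp only [Set.mem_setOf_eq] at hh ⊢
    have hx : (0:ℝ) < 1 + ρ * (cnorm h) ^ 2 := by
      have := cnorm_sq_nonneg h; nlinarith
    rw [Real.logb_le_iff_le_rpow one_lt_two hx] at hh
    rw [ht₀_def, le_div_iff₀ hρ0]
    nlinarith
  calc Pout Nt R ρ ≤ stdComplexGaussian Nt {h | (cnorm h) ^ 2 ≤ t₀} := measure_mono hsub
    _ ≤ ENNReal.ofReal (1 / π ^ Nt) * volume {h : Fin Nt → ℂ | (cnorm h) ^ 2 ≤ t₀} := by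
        rw [stdComplexGaussian, withDensity_apply _ hmeas, ← setLIntegral_const _ _]
        apply setLIntegral_mono measurable_const
        intro x _
        apply ENNReal.ofReal_le_ofReal
        apply div_le_div_of_nonneg_right ?_ (by positivity)
        exact Real.exp_le_one_iff.mpr (by nlinarith [cnorm_sq_nonneg x])
    _ ≤ _ := by
        rw [vol_lemma Nt hNt ht₀, ← ENNReal.ofReal_mul (by positivity)]
        apply ENNReal.ofReal_le_ofReal
        apply le_of_eq
        have hπ : (0:ℝ) < π ^ Nt := by positivity
        field_simp

lemma limsup_part (Nt : ℕ) (hNt : 1 ≤ Nt) (R : ℝ) (hR : 1 ≤ R) :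
    Filter.limsup (fun ρ : ℝ =>
        (-Real.log ((Pout Nt R ρ).toReal)) / Real.log ρ) Filter.atTop ≤ (Nt : ℝ) := by
  set c : ℝ := Real.exp (-1) / (2 ^ Nt * (Nat.factorial Nt)) with hc_def
  have hc0 : 0 < c := by
    have : (0:ℝ) < (Nat.factorial Nt : ℝ) := by exact_mod_cast Nt.factorial_pos
    positivity
  set C : ℝ := -Real.log c - (Nt : ℝ) * R * Real.log 2 with hC_def
  set f : ℝ → ℝ := fun ρ => (-Real.log ((Pout Nt R ρ).toReal)) / Real.log ρ with hf_def
  set g : ℝ → ℝ := fun ρ => C / Real.log ρ + (Nt : ℝ) with hg_def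
  have h2R : (1:ℝ) ≤ (2:ℝ) ^ R := Real.one_le_rpow one_le_two (by linarith)
  have hev : ∀ᶠ ρ in atTop, (2:ℝ) ^ R ⊔ 2 ≤ ρ := eventually_ge_atTop _
  -- facts in eventual region
  have hfacts : ∀ ρ : ℝ, (2:ℝ) ^ R ⊔ 2 ≤ ρ → (0 ≤ f ρ ∧ f ρ ≤ g ρ) := by
    intro ρ hρ
    have hρ2R : (2:ℝ) ^ R ≤ ρ := le_trans le_sup_left hρ
    have hρ2 : (2:ℝ) ≤ ρ := le_trans le_sup_right hρ
    have hρ0 : (0:ℝ) < ρ := by linarith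
    have hρ1 : (1:ℝ) < ρ := by linarith
    have hρR1 : (2:ℝ) ^ (R - 1) < ρ :=
      lt_of_lt_of_le ((Real.rpow_lt_rpow_left_iff one_lt_two).mpr (by linarith)) hρ2R
    have hlogρ : 0 < Real.log ρ := Real.log_pos hρ1
    have hfin : Pout Nt R ρ ≠ ⊤ :=
      ne_top_of_le_ne_top ENNReal.ofReal_ne_top (pout_upper Nt hNt R hR ρ hρ0)
    set b : ℝ := c * (2:ℝ) ^ ((Nt : ℝ) * R) / ρ ^ Nt with hb_def
    have hb0 : 0 < b := by positivity
    have hlb : b ≤ (Pout Nt R ρ).toReal := by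
      rw [← ENNReal.ofReal_le_iff_le_toReal hfin]
      exact pout_lower Nt hNt R hR ρ hρR1
    have ht₀0 : 0 ≤ ((2:ℝ) ^ R - 1) / ρ := by
      apply div_nonneg _ hρ0.le; linarith
    have hfacpos : (0:ℝ) < (Nat.factorial Nt : ℝ) := by exact_mod_cast Nt.factorial_pos
    have hub : (Pout Nt R ρ).toReal ≤ (((2:ℝ) ^ R - 1) / ρ) ^ Nt / (Nat.factorial Nt : ℝ) :=
      ENNReal.toReal_le_of_le_ofReal (div_nonneg (pow_nonneg ht₀0 _) hfacpos.le)
        (pout_upper Nt hNt R hR ρ hρ0)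
    have hle1 : (Pout Nt R ρ).toReal ≤ 1 := by
      have ht₀ : ((2:ℝ) ^ R - 1) / ρ ≤ 1 := by
        rw [div_le_one hρ0]; linarith
      have hp : (((2:ℝ) ^ R - 1) / ρ) ^ Nt ≤ 1 := pow_le_one₀ ht₀0 ht₀
      have hfac1 : (1:ℝ) ≤ (Nat.factorial Nt : ℝ) := by exact_mod_cast Nt.factorial_pos
      calc (Pout Nt R ρ).toReal ≤ _ := hub
        _ ≤ (((2:ℝ) ^ R - 1) / ρ) ^ Nt := div_le_self (by positivity) hfac1
        _ ≤ 1 := hp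
    constructor
    · apply div_nonneg _ hlogρ.le
      simp only [neg_nonneg]
      exact Real.log_nonpos ENNReal.toReal_nonneg hle1
    · have hlogb : Real.log b = Real.log c + (Nt : ℝ) * R * Real.log 2 - (Nt : ℝ) * Real.log ρ := by
        rw [hb_def, Real.log_div (by positivity) (by positivity),
          Real.log_mul hc0.ne' (by positivity), Real.log_rpow two_pos, Real.log_pow]
      have hloglb : Real.log b ≤ Real.log ((Pout Nt R ρ).toReal) := Real.log_le_log hb0 hlb
      have hnum : -Real.log ((Pout Nt R ρ).toReal) ≤ C + (Nt : ℝ) * Real.log ρ := by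
        rw [hC_def]; linarith
      have : f ρ ≤ (C + (Nt : ℝ) * Real.log ρ) / Real.log ρ :=
        (div_le_div_iff_of_pos_right hlogρ).mpr hnum
      calc f ρ ≤ (C + (Nt : ℝ) * Real.log ρ) / Real.log ρ := this
        _ = C / Real.log ρ + (Nt : ℝ) := by
            rw [add_div, mul_div_assoc, div_self hlogρ.ne', mul_one]
  have hfg : f ≤ᶠ[atTop] g := hev.mono fun ρ h => (hfacts ρ h).2
  have hf0 : ∀ᶠ ρ in atTop, (0:ℝ) ≤ f ρ := hev.mono fun ρ h => (hfacts ρ h).1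
  have hgtend : Tendsto g atTop (nhds ((Nt : ℝ))) := by
    have h1 : Tendsto (fun ρ : ℝ => C / Real.log ρ) atTop (nhds 0) :=
      Tendsto.div_atTop tendsto_const_nhds Real.tendsto_log_atTop
    have := h1.add (tendsto_const_nhds (x := (Nt : ℝ)))
    simpa using this
  calc Filter.limsup f atTop ≤ Filter.limsup g atTop := by
        exact limsup_le_limsup hfg
          (Filter.IsCoboundedUnder.of_frequently_ge hf0.frequently)
          hgtend.isBoundedUnder_le
    _ = (Nt : ℝ) := hgtend.limsup_eq

theorem stmt13 (Nt : ℕ) (hNt : 1 ≤ Nt) (R : ℝ) (hR : 1 ≤ R) :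
    (∀ ρ : ℝ, (2 : ℝ) ^ (R - 1) < ρ →
      ENNReal.ofReal ((Real.exp (-1) / (2 ^ Nt * (Nat.factorial Nt))) *
          (2 : ℝ) ^ ((Nt : ℝ) * R) / ρ ^ Nt) ≤ Pout Nt R ρ) ∧
    Filter.limsup (fun ρ : ℝ =>
        (-Real.log ((Pout Nt R ρ).toReal)) / Real.log ρ) Filter.atTop ≤ (Nt : ℝ) :=
  ⟨fun ρ hρ => pout_lower Nt hNt R hR ρ hρ, limsup_part Nt hNt R hR⟩
end

section
/- For N_t ≥ 1, the series Σ_{i=0}^∞ 2^{N_t(i+3)} e^{−2^i} converges; consequently, if for all γ > 1, Pr{d² ≤ γ/ρ} ≤ c γ^{N_t} ρ^{−N_t} (ln ρ)^{N_t+1} and Pr{|w|² ≥ θ/ρ} ≤ e^{−θ}, then a layered union bound gives Pr{|w|² ≥ d²/4} ≤ c' ρ^{−N_t} (ln ρ)^{N_t+1} for all sufficiently large ρ, where c' depends only on N_t and c. -/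
open MeasureTheory Real ProbabilityTheory Filter

lemma aux_summable (Nt : ℕ) :
    Summable (fun i : ℕ => (2 : ℝ) ^ (Nt * (i + 3)) * Real.exp (-(2 : ℝ) ^ i)) := by
  have h0 : Tendsto (fun n : ℕ => (2:ℝ)^Nt * Real.exp (-(2:ℝ)^n)) atTop (nhds 0) := by
    have h1 : Tendsto (fun n : ℕ => -(2:ℝ)^n) atTop atBot :=
      tendsto_neg_atTop_atBot.comp (tendsto_pow_atTop_atTop_of_one_lt one_lt_two)
    have := (Real.tendsto_exp_atBot.comp h1).const_mul ((2:ℝ)^Nt)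
    simpa using this
  have hev : ∀ᶠ n in atTop, (2:ℝ)^Nt * Real.exp (-(2:ℝ)^n) ≤ 1/2 :=
    h0.eventually_le_const (by norm_num)
  refine summable_of_ratio_norm_eventually_le (r := 1/2) (by norm_num) ?_
  filter_upwards [hev] with n hn
  have hfn : (0:ℝ) ≤ (2:ℝ)^(Nt*(n+3)) * Real.exp (-(2:ℝ)^n) :=
    mul_nonneg (by positivity) (Real.exp_nonneg _)
  have heq : (2:ℝ)^(Nt*(n+1+3)) * Real.exp (-(2:ℝ)^(n+1))
      = ((2:ℝ)^Nt * Real.exp (-(2:ℝ)^n)) * ((2:ℝ)^(Nt*(n+3)) * Real.exp (-(2:ℝ)^n)) := by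
    have h2 : (2:ℝ)^(n+1) = (2:ℝ)^n + (2:ℝ)^n := by ring
    have h3 : Nt*(n+1+3) = Nt + Nt*(n+3) := by ring
    rw [h3, pow_add, h2, neg_add, Real.exp_add]
    ring
  rw [Real.norm_eq_abs, Real.norm_eq_abs, abs_of_nonneg (by positivity), abs_of_nonneg hfn, heq]
  exact mul_le_mul_of_nonneg_right hn hfn

theorem stmt19 (Nt : ℕ) (hNt : 1 ≤ Nt) (c : ℝ) (hc : 0 < c) :
    -- the layered series converges
    Summable (fun i : ℕ => (2 : ℝ) ^ (Nt * (i + 3)) * Real.exp (-(2 : ℝ) ^ i)) ∧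
    -- and the layered union bound
    ∃ c' ρ₀ : ℝ, 0 < c' ∧ 1 < ρ₀ ∧
      ∀ ρ : ℝ, ρ₀ ≤ ρ →
        ∀ (Ω : Type) [MeasurableSpace Ω] (μ : Measure Ω), IsProbabilityMeasure μ →
          ∀ d w : Ω → ℝ, Measurable d → Measurable w → IndepFun d w μ →
            -- tail bound on the minimum distance d
            (∀ γ : ℝ, 1 < γ →
              μ {ω | (d ω) ^ 2 ≤ γ / ρ} ≤
                ENNReal.ofReal (c * γ ^ Nt / ρ ^ Nt * (Real.log ρ) ^ (Nt + 1))) →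
            -- tail bound on the noise w
            (∀ θ : ℝ, 0 < θ → μ {ω | θ / ρ ≤ (w ω) ^ 2} ≤ ENNReal.ofReal (Real.exp (-θ))) →
            μ {ω | (d ω) ^ 2 / 4 ≤ (w ω) ^ 2} ≤
              ENNReal.ofReal (c' / ρ ^ Nt * (Real.log ρ) ^ (Nt + 1)) := by
  have hsum := aux_summable Nt
  refine ⟨hsum, ?_⟩
  set S : ℝ := ∑' i : ℕ, (2 : ℝ) ^ (Nt * (i + 3)) * Real.exp (-(2 : ℝ) ^ i) with hS
  have hSnonneg : 0 ≤ S := tsum_nonneg fun i => mul_nonneg (by positivity) (Real.exp_nonneg _)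
  refine ⟨c * ((8:ℝ)^Nt + S), 2, by positivity, one_lt_two, ?_⟩
  intro ρ hρ Ω _ μ hμ d w hd hw hInd hddist hwdist
  have hρ2 : (2:ℝ) ≤ ρ := hρ
  have hρpos : (0:ℝ) < ρ := by linarith
  have hLnn : (0:ℝ) ≤ (Real.log ρ) ^ (Nt + 1) := by
    have : 0 ≤ Real.log ρ := Real.log_nonneg (by linarith)
    positivity
  set L : ℝ := (Real.log ρ) ^ (Nt + 1) with hLdef
  set A : Set Ω := {ω | (d ω)^2 ≤ 8/ρ} with hA
  set C : ℕ → Set Ω := fun i => {ω | (d ω)^2 ≤ (2:ℝ)^(i+3)/ρ} ∩ {ω | (2:ℝ)^i/ρ ≤ (w ω)^2} with hC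
  -- set inclusion
  have hsub : {ω | (d ω)^2/4 ≤ (w ω)^2} ⊆ A ∪ ⋃ i, C i := by
    intro ω hω
    simp only [Set.mem_setOf_eq] at hω
    by_cases hcase : (d ω)^2 ≤ 8/ρ
    · exact Or.inl hcase
    · right
      push_neg at hcase
      set x : ℝ := ρ * (d ω)^2 with hx
      have hx8 : (8:ℝ) < x := by
        rw [hx]; rw [div_lt_iff₀ hρpos] at hcase; linarith
      set n : ℕ := ⌊Real.logb 2 x⌋₊ with hn
      have hxpos : (0:ℝ) < x := by linarith
      have hlogb3 : (3:ℝ) ≤ Real.logb 2 x := by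
        have h1 : Real.logb 2 8 ≤ Real.logb 2 x :=
          Real.logb_le_logb_of_le one_lt_two (by norm_num) (le_of_lt hx8)
        have h8 : Real.logb 2 8 = 3 := by
          rw [show (8:ℝ) = 2^(3:ℕ) by norm_num, Real.logb_pow,
            Real.logb_self_eq_one one_lt_two]
          norm_num
        linarith
      have hn3 : 3 ≤ n := Nat.le_floor (by exact_mod_cast hlogb3)
      have hlow : (2:ℝ)^n ≤ x := by
        have h1 : (n:ℝ) ≤ Real.logb 2 x := Nat.floor_le (by linarith)
        calc (2:ℝ)^n = (2:ℝ)^((n:ℝ)) := by rw [Real.rpow_natCast]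
          _ ≤ (2:ℝ)^(Real.logb 2 x) := Real.rpow_le_rpow_of_exponent_le one_le_two h1
          _ = x := Real.rpow_logb (by norm_num) (by norm_num) hxpos
      have hhigh : x < (2:ℝ)^(n+1) := by
        have h1 : Real.logb 2 x < (n:ℝ) + 1 := Nat.lt_floor_add_one _
        calc x = (2:ℝ)^(Real.logb 2 x) := (Real.rpow_logb (by norm_num) (by norm_num) hxpos).symm
          _ < (2:ℝ)^(((n:ℝ)+1)) := Real.rpow_lt_rpow_of_exponent_lt one_lt_two h1
          _ = (2:ℝ)^(n+1) := by rw [← Real.rpow_natCast 2 (n+1)]; push_cast; ring_nf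
      refine Set.mem_iUnion.2 ⟨n - 2, ?_, ?_⟩
      · show (d ω)^2 ≤ (2:ℝ)^(n-2+3)/ρ
        have hn23 : n - 2 + 3 = n + 1 := by omega
        rw [hn23, le_div_iff₀ hρpos]
        calc (d ω)^2 * ρ = x := by rw [hx]; ring
          _ ≤ (2:ℝ)^(n+1) := le_of_lt hhigh
      · show (2:ℝ)^(n-2)/ρ ≤ (w ω)^2
        have h4 : (2:ℝ)^(n-2) * 4 ≤ x := by
          have he : (2:ℝ)^(n-2) * 4 = (2:ℝ)^n := by
            have hnn : n - 2 + 2 = n := by omega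
            calc (2:ℝ)^(n-2) * 4 = (2:ℝ)^(n-2) * 2^2 := by norm_num
              _ = (2:ℝ)^(n-2+2) := by rw [pow_add]
              _ = (2:ℝ)^n := by rw [hnn]
          linarith
        rw [div_le_iff₀ hρpos]
        have h5 : x / 4 ≤ (w ω)^2 * ρ := by
          have := mul_le_mul_of_nonneg_right hω (le_of_lt hρpos)
          calc x / 4 = (d ω)^2/4 * ρ := by rw [hx]; ring
            _ ≤ (w ω)^2 * ρ := this
        linarith
  -- bound on each C i
  have hCi : ∀ i : ℕ, μ (C i) ≤
      ENNReal.ofReal ((c/ρ^Nt * L) * ((2:ℝ)^(Nt*(i+3)) * Real.exp (-(2:ℝ)^i))) := by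
    intro i
    have hms1 : MeasurableSet {x : ℝ | x^2 ≤ (2:ℝ)^(i+3)/ρ} :=
      measurableSet_le (measurable_id.pow_const 2) measurable_const
    have hms2 : MeasurableSet {x : ℝ | (2:ℝ)^i/ρ ≤ x^2} :=
      measurableSet_le measurable_const (measurable_id.pow_const 2)
    have hprod : μ (C i) = μ {ω | (d ω)^2 ≤ (2:ℝ)^(i+3)/ρ} * μ {ω | (2:ℝ)^i/ρ ≤ (w ω)^2} := by
      have := hInd.measure_inter_preimage_eq_mul _ _ hms1 hms2
      exact this
    rw [hprod]
    have h1 : μ {ω | (d ω)^2 ≤ (2:ℝ)^(i+3)/ρ} ≤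
        ENNReal.ofReal (c * ((2:ℝ)^(i+3)) ^ Nt / ρ ^ Nt * L) := by
      exact hddist ((2:ℝ)^(i+3)) (one_lt_two.trans_le (by
        calc (2:ℝ) = 2^1 := (pow_one 2).symm
          _ ≤ 2^(i+3) := pow_le_pow_right₀ one_le_two (by omega)))
    have h2 : μ {ω | (2:ℝ)^i/ρ ≤ (w ω)^2} ≤ ENNReal.ofReal (Real.exp (-(2:ℝ)^i)) :=
      hwdist ((2:ℝ)^i) (by positivity)
    calc μ {ω | (d ω)^2 ≤ (2:ℝ)^(i+3)/ρ} * μ {ω | (2:ℝ)^i/ρ ≤ (w ω)^2}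
        ≤ ENNReal.ofReal (c * ((2:ℝ)^(i+3)) ^ Nt / ρ ^ Nt * L) *
          ENNReal.ofReal (Real.exp (-(2:ℝ)^i)) := mul_le_mul' h1 h2
      _ = ENNReal.ofReal ((c * ((2:ℝ)^(i+3)) ^ Nt / ρ ^ Nt * L) * Real.exp (-(2:ℝ)^i)) := by
          rw [← ENNReal.ofReal_mul (by positivity)]
      _ = ENNReal.ofReal ((c/ρ^Nt * L) * ((2:ℝ)^(Nt*(i+3)) * Real.exp (-(2:ℝ)^i))) := by
          congr 1
          have : ((2:ℝ)^(i+3)) ^ Nt = (2:ℝ)^(Nt*(i+3)) := by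
            rw [← pow_mul, Nat.mul_comm]
          rw [this]; ring
  -- assemble
  have hAbound : μ A ≤ ENNReal.ofReal (c * (8:ℝ)^Nt / ρ^Nt * L) := hddist 8 (by norm_num)
  have hK : (0:ℝ) ≤ c/ρ^Nt * L := by positivity
  have hterm : ∀ i : ℕ, 0 ≤ (c/ρ^Nt * L) * ((2:ℝ)^(Nt*(i+3)) * Real.exp (-(2:ℝ)^i)) :=
    fun i => mul_nonneg hK (mul_nonneg (by positivity) (Real.exp_nonneg _))
  calc μ {ω | (d ω)^2/4 ≤ (w ω)^2} ≤ μ (A ∪ ⋃ i, C i) := measure_mono hsub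
    _ ≤ μ A + μ (⋃ i, C i) := measure_union_le _ _
    _ ≤ μ A + ∑' i, μ (C i) := add_le_add_right (measure_iUnion_le _) _
    _ ≤ ENNReal.ofReal (c * (8:ℝ)^Nt / ρ^Nt * L) +
        ∑' i, ENNReal.ofReal ((c/ρ^Nt * L) * ((2:ℝ)^(Nt*(i+3)) * Real.exp (-(2:ℝ)^i))) :=
          add_le_add hAbound (ENNReal.tsum_le_tsum hCi)
    _ = ENNReal.ofReal (c * (8:ℝ)^Nt / ρ^Nt * L) +
        ENNReal.ofReal (∑' i, (c/ρ^Nt * L) * ((2:ℝ)^(Nt*(i+3)) * Real.exp (-(2:ℝ)^i))) := by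
          rw [ENNReal.ofReal_tsum_of_nonneg hterm (hsum.mul_left _)]
    _ = ENNReal.ofReal (c * (8:ℝ)^Nt / ρ^Nt * L + (c/ρ^Nt * L) * S) := by
          rw [tsum_mul_left, ← hS, ENNReal.ofReal_add (by positivity) (mul_nonneg hK hSnonneg)]
    _ = ENNReal.ofReal (c * ((8:ℝ)^Nt + S) / ρ^Nt * L) := by
          congr 1; ring
end
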